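/- Let $H$ be a cocommutative bialgebra over a commutative ring $R$. Then for all positive integers $r, s$, the power maps $\lambda_r = \mu^{(r)}\delta^{(r)} : H \to H$ satisfy $\lambda_r \circ \lambda_s = \lambda_{rs}$ and $\lambda_r * \lambda_s = \lambda_{r+s}$, where $*$ denotes the convolution product. -/
import Mathlib


open TensorProduct

noncomputable section

variable (R : Type*) [CommRing R] (H : Type*) [Ring H] [Bialgebra R H]

/-- The convolution product `f * g = μ ∘ (f ⊗ g) ∘ δ` on `End_R(H)` for a bialgebra `H`. -/
def conv (f g : H →ₗ[R] H) : H →ₗ[R] H :=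
  (LinearMap.mul' R H) ∘ₗ (TensorProduct.map f g) ∘ₗ (Coalgebra.comul (R := R))

/-- The convolution unit `η ∘ ε`. -/
def convUnit : H →ₗ[R] H :=
  (Algebra.linearMap R H) ∘ₗ (Coalgebra.counit (R := R))

/-- The `r`-th power map `λ_r = Id_H^{*r} = μ^{(r)} ∘ δ^{(r)}`, the `r`-fold convolution
power of the identity map of `H`. -/
def lam : ℕ → (H →ₗ[R] H)
  | 0 => convUnit R H
  | r + 1 => conv R H LinearMap.id (lam r)

/-! ### Auxiliary lemmas -/

lemma conv_unit_right (f : H →ₗ[R] H) : conv R H f (convUnit R H) = f := by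
  have e : TensorProduct.map f (convUnit R H)
      = TensorProduct.map f (Algebra.linearMap R H) ∘ₗ
        (Coalgebra.counit (R := R) (A := H)).lTensor H := by
    ext a b
    simp [convUnit]
  ext x
  simp only [conv, LinearMap.comp_apply, e, Coalgebra.lTensor_counit_comul]
  simp

lemma lam_one : lam R H 1 = LinearMap.id := by
  show conv R H LinearMap.id (convUnit R H) = LinearMap.id
  rw [conv_unit_right]

lemma lam_succ (n : ℕ) : lam R H (n + 1) = conv R H LinearMap.id (lam R H n) := rfl

lemma conv_assoc (f g h : H →ₗ[R] H) :
    conv R H (conv R H f g) h = conv R H f (conv R H g h) := by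
  have A1 : LinearMap.mul' R H ∘ₗ TensorProduct.map (conv R H f g) h
      = (LinearMap.mul' R H ∘ₗ
          TensorProduct.map (LinearMap.mul' R H ∘ₗ TensorProduct.map f g) h) ∘ₗ
        (Coalgebra.comul (R := R) (A := H)).rTensor H := by
    ext a b
    simp [conv]
  have A2 : LinearMap.mul' R H ∘ₗ TensorProduct.map f (conv R H g h)
      = (LinearMap.mul' R H ∘ₗ
          TensorProduct.map f (LinearMap.mul' R H ∘ₗ TensorProduct.map g h)) ∘ₗ
        (Coalgebra.comul (R := R) (A := H)).lTensor H := by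
    ext a b
    simp [conv]
  have A3 : (LinearMap.mul' R H ∘ₗ
        TensorProduct.map (LinearMap.mul' R H ∘ₗ TensorProduct.map f g) h) ∘ₗ
        (TensorProduct.assoc R H H H).symm.toLinearMap
      = LinearMap.mul' R H ∘ₗ
          TensorProduct.map f (LinearMap.mul' R H ∘ₗ TensorProduct.map g h) := by
    ext a b c
    simp [mul_assoc]
  ext x
  have h1 := LinearMap.congr_fun A1 (Coalgebra.comul (R := R) x)
  have h2 := LinearMap.congr_fun A2 (Coalgebra.comul (R := R) x)
  have h3 := LinearMap.congr_fun A3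
    ((Coalgebra.comul (R := R) (A := H)).lTensor H (Coalgebra.comul (R := R) x))
  have hx := Coalgebra.coassoc_symm_apply (R := R) (A := H) x
  simp only [LinearMap.comp_apply, LinearEquiv.coe_coe] at h1 h2 h3 hx
  show LinearMap.mul' R H (TensorProduct.map (conv R H f g) h (Coalgebra.comul x))
      = LinearMap.mul' R H (TensorProduct.map f (conv R H g h) (Coalgebra.comul x))
  rw [h1, ← hx, h3, ← h2]

lemma key (hcocomm : (TensorProduct.comm R H H).toLinearMap ∘ₗ (Coalgebra.comul (R := R)) =
      (Coalgebra.comul (R := R) (A := H))) :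
    (tensorTensorTensorComm R H H H H).toLinearMap ∘ₗ
      TensorProduct.map (Coalgebra.comul (R := R)) (Coalgebra.comul (R := R)) ∘ₗ
        (Coalgebra.comul (R := R) (A := H))
    = TensorProduct.map (Coalgebra.comul (R := R)) (Coalgebra.comul (R := R)) ∘ₗ
        (Coalgebra.comul (R := R) (A := H)) := by
  set d : H →ₗ[R] H ⊗[R] H := Coalgebra.comul (R := R) (A := H) with hd
  set Ψ : H ⊗[R] ((H ⊗[R] H) ⊗[R] H) →ₗ[R] (H ⊗[R] H) ⊗[R] (H ⊗[R] H) :=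
    (TensorProduct.assoc R H H (H ⊗[R] H)).symm.toLinearMap ∘ₗ
      ((TensorProduct.assoc R H H H).toLinearMap.lTensor H) with hΨ
  have step1 : TensorProduct.map d d ∘ₗ d
      = (d.lTensor (H ⊗[R] H)) ∘ₗ ((d.rTensor H) ∘ₗ d) := by
    rw [← LinearMap.lTensor_comp_rTensor, LinearMap.comp_assoc]
  have coas : (d.rTensor H) ∘ₗ d
      = (TensorProduct.assoc R H H H).symm.toLinearMap ∘ₗ (d.lTensor H) ∘ₗ d := by
    rw [hd, ← Coalgebra.coassoc_symm]
  have nat1 : (d.lTensor (H ⊗[R] H)) ∘ₗ (TensorProduct.assoc R H H H).symm.toLinearMap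
      = (TensorProduct.assoc R H H (H ⊗[R] H)).symm.toLinearMap ∘ₗ
        ((d.lTensor H).lTensor H) := by
    ext x a b
    simp
  have step3 : ((d.lTensor H).lTensor H) ∘ₗ (d.lTensor H)
      = ((TensorProduct.assoc R H H H).toLinearMap.lTensor H) ∘ₗ
        ((d.rTensor H).lTensor H) ∘ₗ (d.lTensor H) := by
    rw [← LinearMap.lTensor_comp, ← LinearMap.lTensor_comp, ← LinearMap.lTensor_comp]
    congr 1
    rw [← LinearMap.comp_assoc, hd, ← Coalgebra.coassoc]
    rw [LinearMap.comp_assoc]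
  have chunk : ((d.lTensor H).lTensor H) ∘ₗ (d.lTensor H) ∘ₗ d
      = ((TensorProduct.assoc R H H H).toLinearMap.lTensor H) ∘ₗ
        ((d.rTensor H).lTensor H) ∘ₗ (d.lTensor H) ∘ₗ d := by
    rw [← LinearMap.comp_assoc, step3]
    simp only [LinearMap.comp_assoc]
  have P1 : TensorProduct.map d d ∘ₗ d
      = Ψ ∘ₗ ((d.rTensor H).lTensor H) ∘ₗ (d.lTensor H) ∘ₗ d := by
    rw [step1, coas, ← LinearMap.comp_assoc, nat1, LinearMap.comp_assoc, chunk, hΨ]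
    simp only [LinearMap.comp_assoc]
  have P2 : (tensorTensorTensorComm R H H H H).toLinearMap ∘ₗ Ψ
      = Ψ ∘ₗ (((TensorProduct.comm R H H).toLinearMap.rTensor H).lTensor H) := by
    ext x y z w
    simp [hΨ]
  have P3 : (((TensorProduct.comm R H H).toLinearMap.rTensor H).lTensor H) ∘ₗ
        ((d.rTensor H).lTensor H) = (d.rTensor H).lTensor H := by
    rw [← LinearMap.lTensor_comp, ← LinearMap.rTensor_comp, hd, hcocomm]
  calc (tensorTensorTensorComm R H H H H).toLinearMap ∘ₗ TensorProduct.map d d ∘ₗ d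
      = (tensorTensorTensorComm R H H H H).toLinearMap ∘ₗ
          Ψ ∘ₗ ((d.rTensor H).lTensor H) ∘ₗ (d.lTensor H) ∘ₗ d := by rw [P1]
    _ = ((tensorTensorTensorComm R H H H H).toLinearMap ∘ₗ Ψ) ∘ₗ
          ((d.rTensor H).lTensor H) ∘ₗ (d.lTensor H) ∘ₗ d := by
          simp only [LinearMap.comp_assoc]
    _ = Ψ ∘ₗ ((((TensorProduct.comm R H H).toLinearMap.rTensor H).lTensor H) ∘ₗ
          ((d.rTensor H).lTensor H)) ∘ₗ (d.lTensor H) ∘ₗ d := by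
          rw [P2]; simp only [LinearMap.comp_assoc]
    _ = Ψ ∘ₗ ((d.rTensor H).lTensor H) ∘ₗ (d.lTensor H) ∘ₗ d := by rw [P3]
    _ = TensorProduct.map d d ∘ₗ d := P1.symm

lemma B1 : (Coalgebra.comul (R := R) (A := H)) ∘ₗ LinearMap.mul' R H
    = LinearMap.mul' R (H ⊗[R] H) ∘ₗ
      TensorProduct.map (Coalgebra.comul (R := R)) (Coalgebra.comul (R := R)) := by
  ext a b
  simp

lemma B2 : LinearMap.mul' R (H ⊗[R] H)
    = TensorProduct.map (LinearMap.mul' R H) (LinearMap.mul' R H) ∘ₗ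
      (tensorTensorTensorComm R H H H H).toLinearMap := by
  ext a b c dd
  simp [Algebra.TensorProduct.tmul_mul_tmul]

lemma natT (f g : H →ₗ[R] H) :
    (tensorTensorTensorComm R H H H H).toLinearMap ∘ₗ
      TensorProduct.map (TensorProduct.map f f) (TensorProduct.map g g)
    = TensorProduct.map (TensorProduct.map f g) (TensorProduct.map f g) ∘ₗ
      (tensorTensorTensorComm R H H H H).toLinearMap := by
  ext a b c dd
  simp

lemma conv_comp (f g h : H →ₗ[R] H)
    (hh : (Coalgebra.comul (R := R)) ∘ₗ h
      = TensorProduct.map h h ∘ₗ (Coalgebra.comul (R := R))) :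
    (conv R H f g) ∘ₗ h = conv R H (f ∘ₗ h) (g ∘ₗ h) := by
  rw [conv, conv, LinearMap.comp_assoc, LinearMap.comp_assoc, hh, TensorProduct.map_comp]
  simp only [LinearMap.comp_assoc]

lemma comul_conv
    (hcocomm : (TensorProduct.comm R H H).toLinearMap ∘ₗ (Coalgebra.comul (R := R)) =
      (Coalgebra.comul (R := R) (A := H)))
    (f g : H →ₗ[R] H)
    (hf : (Coalgebra.comul (R := R)) ∘ₗ f
      = TensorProduct.map f f ∘ₗ (Coalgebra.comul (R := R)))
    (hg : (Coalgebra.comul (R := R)) ∘ₗ g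
      = TensorProduct.map g g ∘ₗ (Coalgebra.comul (R := R))) :
    (Coalgebra.comul (R := R)) ∘ₗ conv R H f g
      = TensorProduct.map (conv R H f g) (conv R H f g) ∘ₗ (Coalgebra.comul (R := R)) := by
  calc (Coalgebra.comul (R := R)) ∘ₗ conv R H f g
      = ((Coalgebra.comul (R := R)) ∘ₗ LinearMap.mul' R H) ∘ₗ
        TensorProduct.map f g ∘ₗ (Coalgebra.comul (R := R)) := by
        rw [conv]; simp only [LinearMap.comp_assoc]
    _ = LinearMap.mul' R (H ⊗[R] H) ∘ₗ
        (TensorProduct.map (Coalgebra.comul (R := R)) (Coalgebra.comul (R := R)) ∘ₗ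
          TensorProduct.map f g) ∘ₗ (Coalgebra.comul (R := R)) := by
        rw [B1]; simp only [LinearMap.comp_assoc]
    _ = LinearMap.mul' R (H ⊗[R] H) ∘ₗ
        TensorProduct.map ((Coalgebra.comul (R := R)) ∘ₗ f)
          ((Coalgebra.comul (R := R)) ∘ₗ g) ∘ₗ (Coalgebra.comul (R := R)) := by
        rw [← TensorProduct.map_comp]
    _ = LinearMap.mul' R (H ⊗[R] H) ∘ₗ
        (TensorProduct.map (TensorProduct.map f f) (TensorProduct.map g g) ∘ₗ
          TensorProduct.map (Coalgebra.comul (R := R)) (Coalgebra.comul (R := R))) ∘ₗ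
        (Coalgebra.comul (R := R)) := by
        rw [hf, hg, TensorProduct.map_comp]
    _ = TensorProduct.map (LinearMap.mul' R H) (LinearMap.mul' R H) ∘ₗ
        ((tensorTensorTensorComm R H H H H).toLinearMap ∘ₗ
          TensorProduct.map (TensorProduct.map f f) (TensorProduct.map g g)) ∘ₗ
        TensorProduct.map (Coalgebra.comul (R := R)) (Coalgebra.comul (R := R)) ∘ₗ
        (Coalgebra.comul (R := R)) := by
        rw [B2]; simp only [LinearMap.comp_assoc]
    _ = TensorProduct.map (LinearMap.mul' R H) (LinearMap.mul' R H) ∘ₗ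
        TensorProduct.map (TensorProduct.map f g) (TensorProduct.map f g) ∘ₗ
        ((tensorTensorTensorComm R H H H H).toLinearMap ∘ₗ
          TensorProduct.map (Coalgebra.comul (R := R)) (Coalgebra.comul (R := R)) ∘ₗ
          (Coalgebra.comul (R := R))) := by
        rw [natT]; simp only [LinearMap.comp_assoc]
    _ = TensorProduct.map (LinearMap.mul' R H) (LinearMap.mul' R H) ∘ₗ
        TensorProduct.map (TensorProduct.map f g) (TensorProduct.map f g) ∘ₗ
        TensorProduct.map (Coalgebra.comul (R := R)) (Coalgebra.comul (R := R)) ∘ₗ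
        (Coalgebra.comul (R := R)) := by
        rw [key R H hcocomm]
    _ = TensorProduct.map (conv R H f g) (conv R H f g) ∘ₗ (Coalgebra.comul (R := R)) := by
        rw [conv, TensorProduct.map_comp, TensorProduct.map_comp]
        simp only [LinearMap.comp_assoc]

lemma lam_comul
    (hcocomm : (TensorProduct.comm R H H).toLinearMap ∘ₗ (Coalgebra.comul (R := R)) =
      (Coalgebra.comul (R := R) (A := H))) :
    ∀ s, 1 ≤ s → (Coalgebra.comul (R := R)) ∘ₗ lam R H s
      = TensorProduct.map (lam R H s) (lam R H s) ∘ₗ (Coalgebra.comul (R := R)) := by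
  intro s hs
  induction s, hs using Nat.le_induction with
  | base => simp [lam_one, TensorProduct.map_id]
  | succ n hn ih =>
    rw [lam_succ]
    exact comul_conv R H hcocomm _ _ (by simp [TensorProduct.map_id]) ih

lemma conv_lam : ∀ a, 1 ≤ a → ∀ b, conv R H (lam R H a) (lam R H b) = lam R H (a + b) := by
  intro a ha
  induction a, ha using Nat.le_induction with
  | base =>
    intro b
    rw [lam_one, show (1 + b) = b + 1 from Nat.add_comm 1 b, lam_succ]
  | succ n hn ih =>
    intro b
    rw [lam_succ, conv_assoc, ih, show n + 1 + b = (n + b) + 1 by omega, lam_succ]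

lemma lam_comp
    (hcocomm : (TensorProduct.comm R H H).toLinearMap ∘ₗ (Coalgebra.comul (R := R)) =
      (Coalgebra.comul (R := R) (A := H))) :
    ∀ r, 1 ≤ r → ∀ s, 1 ≤ s → lam R H r ∘ₗ lam R H s = lam R H (r * s) := by
  intro r hr
  induction r, hr using Nat.le_induction with
  | base =>
    intro s hs
    rw [lam_one, one_mul]
    exact LinearMap.id_comp _
  | succ n hn ih =>
    intro s hs
    rw [lam_succ, conv_comp R H _ _ _ (lam_comul R H hcocomm s hs), LinearMap.id_comp, ih s hs,
      conv_lam R H s hs (n * s), show s + n * s = (n + 1) * s by ring]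

/-- If `H` is a cocommutative bialgebra over a commutative ring `R`, then for
all positive integers `r, s` the power maps `λ_r = μ^{(r)} δ^{(r)}` satisfy
`λ_r ∘ λ_s = λ_{rs}` and `λ_r * λ_s = λ_{r+s}` (`*` the convolution product). -/
theorem power_maps_of_cocommutative_bialgebra
    (hcocomm : (TensorProduct.comm R H H).toLinearMap ∘ₗ (Coalgebra.comul (R := R)) =
      (Coalgebra.comul (R := R) (A := H)))
    (r s : ℕ) (hr : 1 ≤ r) (hs : 1 ≤ s) :
    (lam R H r) ∘ₗ (lam R H s) = lam R H (r * s) ∧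
    conv R H (lam R H r) (lam R H s) = lam R H (r + s) := by
  exact ⟨lam_comp R H hcocomm r hr s hs, conv_lam R H r hr s⟩

end
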